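/- (Second gradient torsion energy) Let μ_macro, λ_macro, μ, L_c, a₁, a₂, a₃ ∈ ℝ, ϑ ∈ ℝ, R > 0, and let u(x) = ϑ·(−x₂x₃, x₁x₃, 0) be the torsion displacement field. Then at any fixed x₃, ∫_{{(x₁,x₂) : x₁²+x₂² ≤ R²}} [ μ_macro·‖sym Du(x)‖² + (λ_macro/2)·tr²(Du(x)) + (μL_c²/2)·( a₁·‖D(dev sym Du)(x)‖² + a₂·‖D(skew Du)(x)‖² + (2/9)·a₃·‖D(tr(Du)·𝟙)(x)‖² ) ] d(x₁,x₂) = (1/2)·[ μ_macro + 2μ(a₁ + 3a₂)·L_c²/R² ]·(πR⁴/2)·ϑ², i.e. W_tot = (1/2)·T_w·ϑ² with T_w = (μ_macro + 2μ(a₁+3a₂)L_c²/R²)·I_p and I_p = πR⁴/2. -/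

import Mathlib

open Matrix MeasureTheory Real Filter Asymptotics

noncomputable section

abbrev Mat3 := Matrix (Fin 3) (Fin 3) ℝ

/-- Partial derivative of a scalar field in the `j`-th coordinate direction. -/
def pd (j : Fin 3) (f : (Fin 3 → ℝ) → ℝ) (x : Fin 3 → ℝ) : ℝ :=
  fderiv ℝ f x (Pi.single j 1)

/-- Jacobian matrix (Du)ᵢⱼ = ∂uᵢ/∂xⱼ of a vector field. -/
def jac (u : (Fin 3 → ℝ) → Fin 3 → ℝ) (x : Fin 3 → ℝ) : Mat3 :=
  Matrix.of fun i j => pd j (fun y => u y i) x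

/-- Symmetric part of a matrix. -/
def symm3 (P : Mat3) : Mat3 := (1/2 : ℝ) • (P + Pᵀ)

/-- Skew-symmetric part of a matrix. -/
def skew3 (P : Mat3) : Mat3 := (1/2 : ℝ) • (P - Pᵀ)

/-- Deviatoric part of a matrix. -/
def dev3 (P : Mat3) : Mat3 := P - (Matrix.trace P / 3) • (1 : Mat3)

/-- Squared Frobenius norm. -/
def frob2 (P : Mat3) : ℝ := ∑ i, ∑ j, (P i j)^2

/-- Frobenius inner product. -/
def frobInner (P Q : Mat3) : ℝ := ∑ i, ∑ j, P i j * Q i j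

/-- Row-wise divergence of a matrix field. -/
def matDiv (σ : (Fin 3 → ℝ) → Mat3) (x : Fin 3 → ℝ) : Fin 3 → ℝ :=
  fun i => ∑ j, pd j (fun y => σ y i j) x

/-- Curl of a vector field. -/
def curl3 (v : (Fin 3 → ℝ) → Fin 3 → ℝ) (x : Fin 3 → ℝ) : Fin 3 → ℝ :=
  ![pd 1 (fun y => v y 2) x - pd 2 (fun y => v y 1) x,
    pd 2 (fun y => v y 0) x - pd 0 (fun y => v y 2) x,
    pd 0 (fun y => v y 1) x - pd 1 (fun y => v y 0) x]

/-- Row-wise Curl of a matrix field. -/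
def matCurl (P : (Fin 3 → ℝ) → Mat3) (x : Fin 3 → ℝ) : Mat3 :=
  Matrix.of fun i => curl3 (fun y => P y i) x

/-- The torsion displacement field u(x) = ϑ·(−x₂x₃, x₁x₃, 0). -/
def torsionU (ϑ : ℝ) (x : Fin 3 → ℝ) : Fin 3 → ℝ :=
  ![-(ϑ * x 1 * x 2), ϑ * x 0 * x 2, 0]

/-- Squared Frobenius norm of the (third-order) gradient of a matrix field. -/
def gradSq (M : (Fin 3 → ℝ) → Mat3) (x : Fin 3 → ℝ) : ℝ :=
  ∑ i, ∑ j, ∑ k, (pd k (fun y => M y i j) x) ^ 2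

section Aux

lemma pd_zero' (j : Fin 3) (x : Fin 3 → ℝ) : pd j (fun _ => (0:ℝ)) x = 0 := by
  simp [pd]

lemma pd_lin (c : ℝ) (k j : Fin 3) (x : Fin 3 → ℝ) :
    pd j (fun y => c * y k) x = if k = j then c else 0 := by
  have hk : HasFDerivAt (fun y : Fin 3 → ℝ => y k) (ContinuousLinearMap.proj (R := ℝ) k) x :=
    hasFDerivAt_apply k x
  have h := hk.const_mul c
  rw [pd, h.fderiv]
  by_cases hkj : k = j <;> simp [Pi.single_apply, hkj]

lemma pd_neg_lin (c : ℝ) (k j : Fin 3) (x : Fin 3 → ℝ) :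
    pd j (fun y => -(c * y k)) x = if k = j then -c else 0 := by
  have hk : HasFDerivAt (fun y : Fin 3 → ℝ => y k) (ContinuousLinearMap.proj (R := ℝ) k) x :=
    hasFDerivAt_apply k x
  have h := (hk.const_mul c).neg
  rw [pd, show (fun y : Fin 3 → ℝ => -(c * y k)) = -(fun y => c * y k) from rfl, h.fderiv]
  by_cases hkj : k = j <;> simp [Pi.single_apply, hkj]

lemma pd_mul2 (c : ℝ) (k l j : Fin 3) (x : Fin 3 → ℝ) :
    pd j (fun y => c * y k * y l) x
      = (if k = j then c * x l else 0) + (if l = j then c * x k else 0) := by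
  have hk : HasFDerivAt (fun y : Fin 3 → ℝ => y k) (ContinuousLinearMap.proj (R := ℝ) k) x :=
    hasFDerivAt_apply k x
  have hl : HasFDerivAt (fun y : Fin 3 → ℝ => y l) (ContinuousLinearMap.proj (R := ℝ) l) x :=
    hasFDerivAt_apply l x
  have h := (hk.const_mul c).mul hl
  rw [pd, show (fun y : Fin 3 → ℝ => c * y k * y l) = (fun y => c * y k) * (fun y => y l) from rfl,
    h.fderiv]
  by_cases hkj : k = j <;> by_cases hlj : l = j <;>
    simp [Pi.single_apply, hkj, hlj] <;> ring

lemma pd_neg_mul2 (c : ℝ) (k l j : Fin 3) (x : Fin 3 → ℝ) :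
    pd j (fun y => -(c * y k * y l)) x
      = -((if k = j then c * x l else 0) + (if l = j then c * x k else 0)) := by
  have hk : HasFDerivAt (fun y : Fin 3 → ℝ => y k) (ContinuousLinearMap.proj (R := ℝ) k) x :=
    hasFDerivAt_apply k x
  have hl : HasFDerivAt (fun y : Fin 3 → ℝ => y l) (ContinuousLinearMap.proj (R := ℝ) l) x :=
    hasFDerivAt_apply l x
  have h := ((hk.const_mul c).mul hl).neg
  rw [pd, show (fun y : Fin 3 → ℝ => -(c * y k * y l))
      = -((fun y => c * y k) * (fun y => y l)) from rfl, h.fderiv]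
  by_cases hkj : k = j <;> by_cases hlj : l = j <;>
    simp [Pi.single_apply, hkj, hlj] <;> ring

lemma jac_torsion (ϑ : ℝ) (x : Fin 3 → ℝ) :
    jac (torsionU ϑ) x =
      Matrix.of ![![0, -(ϑ * x 2), -(ϑ * x 1)], ![ϑ * x 2, 0, ϑ * x 0], ![0, 0, 0]] := by
  ext i j
  fin_cases i <;> fin_cases j
  · show pd 0 (fun y => -(ϑ * y 1 * y 2)) x = _
    rw [pd_neg_mul2]; simp
  · show pd 1 (fun y => -(ϑ * y 1 * y 2)) x = _
    rw [pd_neg_mul2]; simp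
  · show pd 2 (fun y => -(ϑ * y 1 * y 2)) x = _
    rw [pd_neg_mul2]; simp
  · show pd 0 (fun y => ϑ * y 0 * y 2) x = _
    rw [pd_mul2]; simp
  · show pd 1 (fun y => ϑ * y 0 * y 2) x = _
    rw [pd_mul2]; simp
  · show pd 2 (fun y => ϑ * y 0 * y 2) x = _
    rw [pd_mul2]; simp
  · show pd 0 (fun _ => (0:ℝ)) x = _
    rw [pd_zero']; norm_num
  · show pd 1 (fun _ => (0:ℝ)) x = _
    rw [pd_zero']; norm_num
  · show pd 2 (fun _ => (0:ℝ)) x = _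
    rw [pd_zero']; norm_num

lemma devsym_torsion (ϑ : ℝ) :
    (fun y => dev3 (symm3 (jac (torsionU ϑ) y))) =
      fun y : Fin 3 → ℝ => Matrix.of
        ![![0, 0, -(ϑ/2 * y 1)], ![0, 0, ϑ/2 * y 0], ![-(ϑ/2 * y 1), ϑ/2 * y 0, 0]] := by
  funext y
  rw [jac_torsion]
  ext i j
  fin_cases i <;> fin_cases j <;>
    simp only [dev3, symm3, Matrix.trace, Matrix.diag, Fin.sum_univ_three, Matrix.sub_apply,
      Matrix.smul_apply, Matrix.add_apply, Matrix.transpose_apply, Matrix.of_apply,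
      Matrix.one_apply, Matrix.cons_val_zero, Matrix.cons_val_one, Matrix.head_cons,
      Matrix.cons_val_two, Matrix.tail_cons, smul_eq_mul] <;>
    norm_num <;> ring

lemma skew_torsion (ϑ : ℝ) :
    (fun y => skew3 (jac (torsionU ϑ) y)) =
      fun y : Fin 3 → ℝ => Matrix.of
        ![![0, -(ϑ * y 2), -(ϑ/2 * y 1)], ![ϑ * y 2, 0, ϑ/2 * y 0],
          ![ϑ/2 * y 1, -(ϑ/2 * y 0), 0]] := by
  funext y
  rw [jac_torsion]
  ext i j
  fin_cases i <;> fin_cases j <;>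
    simp only [skew3, Matrix.sub_apply, Matrix.smul_apply, Matrix.transpose_apply,
      Matrix.of_apply, Matrix.cons_val_zero, Matrix.cons_val_one, Matrix.head_cons,
      Matrix.cons_val_two, Matrix.tail_cons, smul_eq_mul] <;>
    norm_num <;> ring

lemma trace_torsion (ϑ : ℝ) (x : Fin 3 → ℝ) :
    Matrix.trace (jac (torsionU ϑ) x) = 0 := by
  rw [jac_torsion]
  simp [Matrix.trace, Fin.sum_univ_three]

lemma tracefield_torsion (ϑ : ℝ) :
    (fun y => Matrix.trace (jac (torsionU ϑ) y) • (1 : Mat3)) = fun _ => (0 : Mat3) := by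
  funext y
  rw [trace_torsion]
  simp

lemma gradSq_devsym (ϑ : ℝ) (x : Fin 3 → ℝ) :
    gradSq (fun y => dev3 (symm3 (jac (torsionU ϑ) y))) x = ϑ ^ 2 := by
  rw [devsym_torsion, gradSq]
  simp only [Fin.sum_univ_three, Matrix.of_apply, Matrix.cons_val_zero, Matrix.cons_val_one,
    Matrix.head_cons, Matrix.cons_val_two, Matrix.tail_cons, pd_zero', pd_lin, pd_neg_lin]
  norm_num
  try simp
  try ring

lemma gradSq_skew (ϑ : ℝ) (x : Fin 3 → ℝ) :
    gradSq (fun y => skew3 (jac (torsionU ϑ) y)) x = 3 * ϑ ^ 2 := by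
  rw [skew_torsion, gradSq]
  simp only [Fin.sum_univ_three, Matrix.of_apply, Matrix.cons_val_zero, Matrix.cons_val_one,
    Matrix.head_cons, Matrix.cons_val_two, Matrix.tail_cons, pd_zero', pd_lin, pd_neg_lin]
  norm_num
  try simp
  try ring

lemma gradSq_trace (ϑ : ℝ) (x : Fin 3 → ℝ) :
    gradSq (fun y => Matrix.trace (jac (torsionU ϑ) y) • (1 : Mat3)) x = 0 := by
  rw [tracefield_torsion, gradSq]
  simp [Matrix.zero_apply, pd_zero']

lemma frob2_symm_torsion (ϑ : ℝ) (x : Fin 3 → ℝ) :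
    frob2 (symm3 (jac (torsionU ϑ) x)) = ϑ ^ 2 / 2 * ((x 0) ^ 2 + (x 1) ^ 2) := by
  rw [jac_torsion, frob2]
  simp only [symm3, Fin.sum_univ_three, Matrix.smul_apply, Matrix.add_apply,
    Matrix.transpose_apply, Matrix.of_apply, Matrix.cons_val_zero, Matrix.cons_val_one,
    Matrix.head_cons, Matrix.cons_val_two, Matrix.tail_cons, smul_eq_mul]
  ring

open Set in

lemma disk_integral (R c₁ c₂ : ℝ) (hR : 0 < R) :
    ∫ p in {p : ℝ × ℝ | p.1 ^ 2 + p.2 ^ 2 ≤ R ^ 2}, (c₁ * (p.1 ^ 2 + p.2 ^ 2) + c₂) =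
      c₁ * (π * R ^ 4 / 2) + c₂ * (π * R ^ 2) := by
  have hD : MeasurableSet {p : ℝ × ℝ | p.1 ^ 2 + p.2 ^ 2 ≤ R ^ 2} := by
    apply measurableSet_le <;> fun_prop
  set g : ℝ × ℝ → ℝ := fun p => c₁ * (p.1 ^ 2 + p.2 ^ 2) + c₂ with hg
  have h1 : ∫ p in {p : ℝ × ℝ | p.1 ^ 2 + p.2 ^ 2 ≤ R ^ 2}, g p
      = ∫ p, Set.indicator {p : ℝ × ℝ | p.1 ^ 2 + p.2 ^ 2 ≤ R ^ 2} g p :=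
    (integral_indicator hD).symm
  rw [h1, ← integral_comp_polarCoord_symm]
  set S : Set (ℝ × ℝ) := Ioc 0 R ×ˢ Ioo (-π) π with hS
  have h2 : ∀ p ∈ polarCoord.target,
      p.1 • Set.indicator {p : ℝ × ℝ | p.1 ^ 2 + p.2 ^ 2 ≤ R ^ 2} g (polarCoord.symm p)
        = Set.indicator S (fun q => q.1 * (c₁ * q.1 ^ 2 + c₂)) p := by
    rintro ⟨r, θ⟩ hp
    simp only [polarCoord_target, mem_prod, mem_Ioi, mem_Ioo] at hp
    have hmem : polarCoord.symm (r, θ) ∈ {p : ℝ × ℝ | p.1 ^ 2 + p.2 ^ 2 ≤ R ^ 2} ↔ r ≤ R := by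
      have hrr : (r * Real.cos θ) ^ 2 + (r * Real.sin θ) ^ 2 = r ^ 2 := by
        have h := Real.sin_sq_add_cos_sq θ; nlinarith [h]
      simp only [polarCoord_symm_apply, mem_setOf_eq]
      rw [hrr]
      constructor
      · intro h; nlinarith [hp.1]
      · intro h; nlinarith [hp.1]
    by_cases hr : r ≤ R
    · rw [Set.indicator_of_mem (hmem.mpr hr), Set.indicator_of_mem]
      · simp only [polarCoord_symm_apply, hg, smul_eq_mul]
        have : (r * Real.cos θ) ^ 2 + (r * Real.sin θ) ^ 2 = r ^ 2 := by
          have := Real.sin_sq_add_cos_sq θ; nlinarith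
        rw [this]
      · exact ⟨⟨hp.1, hr⟩, hp.2⟩
    · rw [Set.indicator_of_notMem (fun h => hr (hmem.mp h)),
        Set.indicator_of_notMem (fun h => hr h.1.2)]
      simp
  rw [setIntegral_congr_fun polarCoord.open_target.measurableSet h2,
    ← integral_indicator polarCoord.open_target.measurableSet,
    Set.indicator_indicator]
  have hsub : polarCoord.target ∩ S = S := by
    rw [inter_eq_right]
    rintro ⟨r, θ⟩ ⟨h1', h2'⟩
    exact ⟨h1'.1, h2'⟩
  rw [hsub, integral_indicator (by measurability : MeasurableSet S)]
  have hint : IntegrableOn (fun q : ℝ × ℝ => q.1 * (c₁ * q.1 ^ 2 + c₂)) S := by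
    have hc : Continuous (fun q : ℝ × ℝ => q.1 * (c₁ * q.1 ^ 2 + c₂)) := by fun_prop
    apply (hc.integrableOn_Icc (a := ((0 : ℝ), -π)) (b := (R, π))).mono_set
    rintro ⟨r, θ⟩ ⟨h1', h2'⟩
    exact ⟨⟨h1'.1.le, h2'.1.le⟩, ⟨h1'.2, h2'.2.le⟩⟩
  rw [hS, Measure.volume_eq_prod, setIntegral_prod _ (by rwa [← Measure.volume_eq_prod])]
  simp only [integral_const, MeasurableSet.univ, Measure.restrict_apply, Set.univ_inter,
    Real.volume_Ioo, smul_eq_mul]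
  have hπ : (volume.restrict (Ioo (-π) π)).real univ = 2 * π := by
    rw [Measure.real, Measure.restrict_apply_univ, Real.volume_Ioo, ENNReal.toReal_ofReal (by linarith [Real.pi_pos] : (0:ℝ) ≤ π - -π)]; ring
  rw [hπ]
  rw [← intervalIntegral.integral_of_le hR.le]
  have : ∀ r : ℝ, 2 * π * (r * (c₁ * r ^ 2 + c₂)) = (2 * π * c₁) * r ^ 3 + (2 * π * c₂) * r := by
    intro r; ring
  simp only [this]
  rw [intervalIntegral.integral_add
      ((by fun_prop : Continuous fun x : ℝ => 2 * π * c₁ * x ^ 3).intervalIntegrable _ _)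
      ((by fun_prop : Continuous fun x : ℝ => 2 * π * c₂ * x).intervalIntegrable _ _),
    intervalIntegral.integral_const_mul, intervalIntegral.integral_const_mul,
    integral_pow, integral_id]
  push_cast
  ring

end Aux

/-- the second gradient torsion energy per unit length equals
(1/2)·(μ_macro + 2μ(a₁+3a₂)L_c²/R²)·(πR⁴/2)·ϑ². -/
theorem second_gradient_torsion_energy
    (μmacro lam μ Lc a₁ a₂ a₃ ϑ R : ℝ) (hR : 0 < R) (z : ℝ) :
    ∫ p in {p : ℝ × ℝ | p.1 ^ 2 + p.2 ^ 2 ≤ R ^ 2},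
        (μmacro * frob2 (symm3 (jac (torsionU ϑ) ![p.1, p.2, z]))
          + lam / 2 * (Matrix.trace (jac (torsionU ϑ) ![p.1, p.2, z])) ^ 2
          + μ * Lc ^ 2 / 2 *
            (a₁ * gradSq (fun y => dev3 (symm3 (jac (torsionU ϑ) y))) ![p.1, p.2, z]
              + a₂ * gradSq (fun y => skew3 (jac (torsionU ϑ) y)) ![p.1, p.2, z]
              + 2 / 9 * a₃ *
                gradSq (fun y => Matrix.trace (jac (torsionU ϑ) y) • (1 : Mat3))
                  ![p.1, p.2, z]))
      = 1 / 2 * (μmacro + 2 * μ * (a₁ + 3 * a₂) * Lc ^ 2 / R ^ 2) * (π * R ^ 4 / 2) * ϑ ^ 2 := by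
  have key : ∀ p : ℝ × ℝ,
      (μmacro * frob2 (symm3 (jac (torsionU ϑ) ![p.1, p.2, z]))
          + lam / 2 * (Matrix.trace (jac (torsionU ϑ) ![p.1, p.2, z])) ^ 2
          + μ * Lc ^ 2 / 2 *
            (a₁ * gradSq (fun y => dev3 (symm3 (jac (torsionU ϑ) y))) ![p.1, p.2, z]
              + a₂ * gradSq (fun y => skew3 (jac (torsionU ϑ) y)) ![p.1, p.2, z]
              + 2 / 9 * a₃ *
                gradSq (fun y => Matrix.trace (jac (torsionU ϑ) y) • (1 : Mat3))
                  ![p.1, p.2, z]))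
        = μmacro * (ϑ ^ 2 / 2) * (p.1 ^ 2 + p.2 ^ 2)
            + μ * Lc ^ 2 / 2 * (a₁ + 3 * a₂) * ϑ ^ 2 := by
    intro p
    rw [frob2_symm_torsion, trace_torsion, gradSq_devsym, gradSq_skew, gradSq_trace]
    simp only [Matrix.cons_val_zero, Matrix.cons_val_one, Matrix.head_cons]
    ring
  rw [show (fun p : ℝ × ℝ =>
      (μmacro * frob2 (symm3 (jac (torsionU ϑ) ![p.1, p.2, z]))
          + lam / 2 * (Matrix.trace (jac (torsionU ϑ) ![p.1, p.2, z])) ^ 2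
          + μ * Lc ^ 2 / 2 *
            (a₁ * gradSq (fun y => dev3 (symm3 (jac (torsionU ϑ) y))) ![p.1, p.2, z]
              + a₂ * gradSq (fun y => skew3 (jac (torsionU ϑ) y)) ![p.1, p.2, z]
              + 2 / 9 * a₃ *
                gradSq (fun y => Matrix.trace (jac (torsionU ϑ) y) • (1 : Mat3))
                  ![p.1, p.2, z])))
      = fun p : ℝ × ℝ => μmacro * (ϑ ^ 2 / 2) * (p.1 ^ 2 + p.2 ^ 2)
          + μ * Lc ^ 2 / 2 * (a₁ + 3 * a₂) * ϑ ^ 2 from funext key]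
  rw [disk_integral R (μmacro * (ϑ ^ 2 / 2)) (μ * Lc ^ 2 / 2 * (a₁ + 3 * a₂) * ϑ ^ 2) hR]
  field_simp
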